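/- Let n ≥ 1, let A ⊆ B ⊆ ℝ^n be finite sets, assume the vectors of A are linearly independent, and let R₁ ≥ 0 be an odd integer. Then Σ_{r=0}^{R₁} (−1)^r σ_r(A, B) ≤ 1_{{A = B}}. -/

import Mathlib

noncomputable section

/-- A finite set `Y` of vectors of `ℝⁿ` consists of linearly independent vectors. -/
def indepFinset {n : ℕ} (Y : Finset (Fin n → ℝ)) : Prop :=
  LinearIndependent ℝ (fun x : (Y : Set (Fin n → ℝ)) => (x : Fin n → ℝ))

/-- `rank X`: the dimension of the linear span of a finite set `X` of vectors of `ℝⁿ`. -/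
def rankOf {n : ℕ} (X : Finset (Fin n → ℝ)) : ℕ :=
  Module.finrank ℝ ↥(Submodule.span ℝ (X : Set (Fin n → ℝ)))

/-- The rank deficiency `δ(X) = |X| - rank X` of a finite set `X` of vectors of `ℝⁿ`. -/
def rankDef {n : ℕ} (X : Finset (Fin n → ℝ)) : ℕ :=
  X.card - rankOf X

/-- `σ_r(A, B)`: the number of subsets `Z ⊆ B \ A` with `|Z| = r` such that
`δ(A ∪ Z) ≤ 1` if `r` is odd, and `δ(A ∪ Z) = 0` if `r` is even. -/
def sigmaCount {n : ℕ} (r : ℕ) (A B : Finset (Fin n → ℝ)) : ℕ :=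
  (((B \ A).powersetCard r).filter fun Z =>
    rankDef (A ∪ Z) ≤ if Odd r then 1 else 0).card

namespace SieveAux

open Finset

variable {n : ℕ}

lemma rankOf_le_card (X : Finset (Fin n → ℝ)) : rankOf X ≤ X.card :=
  finrank_span_finset_le_card X

lemma rankOf_mono {X Y : Finset (Fin n → ℝ)} (h : X ⊆ Y) : rankOf X ≤ rankOf Y :=
  Submodule.finrank_mono (Submodule.span_mono (Finset.coe_subset.2 h))

lemma rankDef_eq_zero {X : Finset (Fin n → ℝ)} (h : indepFinset X) : rankDef X = 0 := by
  have := finrank_span_finset_eq_card (s := X) h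
  simp [rankDef, rankOf, this]

lemma indep_of_rankDef_eq_zero {X : Finset (Fin n → ℝ)} (h : rankDef X = 0) :
    indepFinset X := by
  have hle := rankOf_le_card X
  have hcard : X.card = rankOf X := by
    unfold rankDef at h; omega
  rw [indepFinset, linearIndependent_iff_card_eq_finrank_span]
  have hrange : (Set.range fun x : (X : Set (Fin n → ℝ)) => (x : Fin n → ℝ))
      = (X : Set (Fin n → ℝ)) := Subtype.range_coe
  rw [Set.finrank, hrange]
  simpa [rankOf] using hcard

lemma indep_mono {X Y : Finset (Fin n → ℝ)} (h : X ⊆ Y) (hY : indepFinset Y) :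
    indepFinset X :=
  LinearIndepOn.mono (v := id) hY (Finset.coe_subset.2 h)

lemma rankDef_insert_le (X : Finset (Fin n → ℝ)) (e : Fin n → ℝ) :
    rankDef (insert e X) ≤ rankDef X + 1 := by
  have h1 : rankOf X ≤ rankOf (insert e X) := rankOf_mono (subset_insert _ _)
  have h2 : rankOf X ≤ X.card := rankOf_le_card X
  have h3 : (insert e X).card ≤ X.card + 1 := card_insert_le _ _
  have h4 : X.card ≤ (insert e X).card := card_le_card (subset_insert _ _)
  unfold rankDef
  omega

lemma toggle_injective {α : Type*} [DecidableEq α] (e : α) :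
    Function.Injective (fun Z : Finset α => if e ∈ Z then Z.erase e else insert e Z) := by
  intro Z₁ Z₂ h
  simp only at h
  by_cases h1 : e ∈ Z₁ <;> by_cases h2 : e ∈ Z₂
  · rw [if_pos h1, if_pos h2] at h
    rw [← Finset.insert_erase h1, ← Finset.insert_erase h2, h]
  · rw [if_pos h1, if_neg h2] at h
    exact absurd (h ▸ Finset.mem_insert_self e Z₂) (Finset.notMem_erase e Z₁)
  · rw [if_neg h1, if_pos h2] at h
    exact absurd (h.symm ▸ Finset.mem_insert_self e Z₁) (Finset.notMem_erase e Z₂)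
  · rw [if_neg h1, if_neg h2] at h
    rw [← Finset.erase_insert h1, ← Finset.erase_insert h2, h]

end SieveAux

open Finset SieveAux in
/-- **Lemma 3.2, lower bound.** If `A ⊆ B ⊆ ℝⁿ` are finite, `A` consists of linearly
independent vectors, and `R₁ ≥ 0` is odd, then
`Σ_{r=0}^{R₁} (-1)ʳ σ_r(A, B) ≤ 1_{A = B}`. -/
theorem sieve_sigma_lower
    (n : ℕ) (hn : 1 ≤ n)
    (A B : Finset (Fin n → ℝ)) (hAB : A ⊆ B) (hA : indepFinset A)
    (R₁ : ℕ) (hR₁ : Odd R₁) :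
    ∑ r ∈ Finset.range (R₁ + 1), (-1 : ℝ) ^ r * (sigmaCount r A B : ℝ)
      ≤ (if A = B then 1 else 0) := by
  classical
  set D := B \ A with hD
  set S : Finset (Finset (Fin n → ℝ)) :=
    D.powerset.filter (fun Z => Z.card ≤ R₁ ∧
      rankDef (A ∪ Z) ≤ if Odd Z.card then 1 else 0) with hS
  -- Step 1: rewrite the sum as a signed sum over `S`.
  have key : ∑ r ∈ Finset.range (R₁ + 1), (-1 : ℝ) ^ r * (sigmaCount r A B : ℝ)
      = ∑ Z ∈ S, (-1 : ℝ) ^ Z.card := by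
    rw [← Finset.sum_fiberwise_of_maps_to (g := fun Z : Finset (Fin n → ℝ) => Z.card)
      (t := Finset.range (R₁ + 1)) (fun Z hZ => by
        simp only [hS, Finset.mem_filter] at hZ
        exact Finset.mem_range.2 (Nat.lt_succ_of_le hZ.2.1))]
    refine Finset.sum_congr rfl fun r hr => ?_
    have hrR : r ≤ R₁ := Nat.lt_succ_iff.1 (Finset.mem_range.1 hr)
    have hset : S.filter (fun Z => Z.card = r)
        = ((D.powersetCard r).filter fun Z =>
            rankDef (A ∪ Z) ≤ if Odd r then 1 else 0) := by
      ext Z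
      simp only [hS, Finset.mem_filter, Finset.powersetCard_eq_filter]
      constructor
      · rintro ⟨⟨hP, -, hc⟩, hcard⟩
        exact ⟨⟨hP, hcard⟩, hcard ▸ hc⟩
      · rintro ⟨⟨hP, hcard⟩, hc⟩
        exact ⟨⟨hP, hcard ▸ hrR, hcard ▸ hc⟩, hcard⟩
    rw [hset, sigmaCount]
    have hcongr : ∑ Z ∈ ((D.powersetCard r).filter fun Z =>
          rankDef (A ∪ Z) ≤ if Odd r then 1 else 0), (-1 : ℝ) ^ Z.card
        = ∑ _Z ∈ ((D.powersetCard r).filter fun Z =>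
          rankDef (A ∪ Z) ≤ if Odd r then 1 else 0), (-1 : ℝ) ^ r := by
      refine Finset.sum_congr rfl fun Z hZ => ?_
      rw [Finset.powersetCard_eq_filter] at hZ
      simp only [Finset.mem_filter] at hZ
      rw [hZ.1.2]
    rw [hcongr, Finset.sum_const, nsmul_eq_mul, mul_comm]
  rw [key]
  -- Step 2: split `S` into even and odd parts.
  have hsplit : ∑ Z ∈ S, (-1 : ℝ) ^ Z.card
      = ((S.filter fun Z => Even Z.card).card : ℝ)
        - ((S.filter fun Z => ¬ Even Z.card).card : ℝ) := by
    rw [← Finset.sum_filter_add_sum_filter_not S (fun Z => Even Z.card)]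
    have h1 : ∑ Z ∈ S.filter (fun Z => Even Z.card), (-1 : ℝ) ^ Z.card
        = ∑ _Z ∈ S.filter (fun Z => Even Z.card), (1 : ℝ) := by
      refine Finset.sum_congr rfl fun Z hZ => ?_
      exact (Finset.mem_filter.1 hZ).2.neg_one_pow
    have h2 : ∑ Z ∈ S.filter (fun Z => ¬ Even Z.card), (-1 : ℝ) ^ Z.card
        = ∑ _Z ∈ S.filter (fun Z => ¬ Even Z.card), (-1 : ℝ) := by
      refine Finset.sum_congr rfl fun Z hZ => ?_
      exact (Nat.not_even_iff_odd.1 (Finset.mem_filter.1 hZ).2).neg_one_pow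
    rw [h1, h2, Finset.sum_const, Finset.sum_const, nsmul_eq_mul, nsmul_eq_mul]
    ring
  rw [hsplit]
  by_cases hEq : A = B
  -- Case A = B : the sum is exactly 1.
  · rw [if_pos hEq]
    have hDempty : D = ∅ := by simp [hD, hEq]
    have hSsingle : S = {∅} := by
      ext Z
      simp only [hS, hDempty, Finset.mem_filter, Finset.mem_powerset,
        Finset.subset_empty, Finset.mem_singleton]
      constructor
      · rintro ⟨h, -⟩; exact h
      · rintro rfl
        refine ⟨rfl, Nat.zero_le _, ?_⟩
        simp [rankDef_eq_zero hA, Nat.odd_iff]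
    rw [hSsingle]
    norm_num [Finset.filter_singleton]
  -- Case A ≠ B : even sets inject into odd sets.
  · rw [if_neg hEq]
    obtain ⟨e₀, he₀B, he₀A⟩ := Finset.exists_of_ssubset (lt_of_le_of_ne hAB hEq)
    have he₀D : e₀ ∈ D := Finset.mem_sdiff.2 ⟨he₀B, he₀A⟩
    have hcardle : (S.filter fun Z => Even Z.card).card
        ≤ (S.filter fun Z => ¬ Even Z.card).card := by
      refine Finset.card_le_card_of_injOn
        (fun Z => if e₀ ∈ Z then Z.erase e₀ else insert e₀ Z) ?_
        ((toggle_injective e₀).injOn)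
      intro Z hZ
      simp only [Finset.mem_coe, hS, Finset.mem_filter, Finset.mem_powerset] at hZ ⊢
      obtain ⟨⟨hZD, hZR, hZrk⟩, hZeven⟩ := hZ
      have hZrk0 : rankDef (A ∪ Z) = 0 := by
        rw [if_neg (Nat.not_odd_iff_even.2 hZeven)] at hZrk
        omega
      by_cases he : e₀ ∈ Z
      · rw [if_pos he]
        have hcard : (Z.erase e₀).card = Z.card - 1 := Finset.card_erase_of_mem he
        have hpos : 1 ≤ Z.card := Finset.card_pos.2 ⟨e₀, he⟩ 
        have hparity : ¬ Even (Z.erase e₀).card := by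
          rw [Nat.even_iff] at hZeven ⊢
          omega
        refine ⟨⟨(Finset.erase_subset _ _).trans hZD, by omega, ?_⟩, hparity⟩
        have hsub : A ∪ Z.erase e₀ ⊆ A ∪ Z :=
          Finset.union_subset_union_right (Finset.erase_subset _ _)
        have : rankDef (A ∪ Z.erase e₀) = 0 :=
          rankDef_eq_zero (indep_mono hsub (indep_of_rankDef_eq_zero hZrk0))
        rw [this]
        exact Nat.zero_le _
      · rw [if_neg he]
        have hcard : (insert e₀ Z).card = Z.card + 1 := Finset.card_insert_of_notMem he
        have hZne : Z.card ≠ R₁ := by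
          intro h
          rw [Nat.even_iff] at hZeven
          rw [Nat.odd_iff] at hR₁
          omega
        have hparity : ¬ Even (insert e₀ Z).card := by
          rw [Nat.even_iff] at hZeven ⊢
          omega
        refine ⟨⟨Finset.insert_subset he₀D hZD, by omega, ?_⟩, hparity⟩
        rw [if_pos (Nat.not_even_iff_odd.1 hparity)]
        have : A ∪ insert e₀ Z = insert e₀ (A ∪ Z) := Finset.union_insert ..
        rw [this]
        calc rankDef (insert e₀ (A ∪ Z)) ≤ rankDef (A ∪ Z) + 1 := rankDef_insert_le _ _
          _ = 1 := by rw [hZrk0]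
    have := Nat.cast_le (α := ℝ) |>.2 hcardle
    linarith
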